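/- Let r > 0 and x ∈ (0, 1/r). Then the function K(z) = −u_r(z)·(r + 2z − 2rz − rz² + 4r²z²)/(r²·z) is differentiable at x with derivative K′(x) = −2·u_r(x)·(−r + 4r² − x + 3rx)/(r(r+x)) − u_r(x)·(1+x)²·(1+x²)/(2x²(r+x)(rx−1)). -/

import Mathlib

set_option maxHeartbeats 1600000


open MeasureTheory Real Filter

/-- `u r z = √(z(1−rz)/(z+r))`, the real branch of `|w_r|` on `(0, 1/r)`. -/
noncomputable def u (r z : ℝ) : ℝ := Real.sqrt (z * (1 - r * z) / (z + r))

/-- The period function `h` of the candidate maximal Klein bottles. -/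
noncomputable def h (r : ℝ) : ℝ :=
  ∫ z in (0:ℝ)..(1/r),
    -2 * u r z * (-1 + z + r * (2 - 3 * z + r * (-4 + 4 * r + 3 * z))) / (r + z)

/-- `A₁ r = ∫₀^{1/r} u_r(z) dz`. -/
noncomputable def A₁ (r : ℝ) : ℝ := ∫ z in (0:ℝ)..(1/r), u r z

/-- `A₂ r = ∫₀^{1/r} u_r(z)/(z+r) dz`. -/
noncomputable def A₂ (r : ℝ) : ℝ := ∫ z in (0:ℝ)..(1/r), u r z / (z + r)

theorem stmt_18 (r : ℝ) (hr : 0 < r) (x : ℝ) (hx : x ∈ Set.Ioo (0:ℝ) (1/r)) :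
    HasDerivAt
      (fun z : ℝ =>
        -u r z * (r + 2 * z - 2 * r * z - r * z ^ 2 + 4 * r ^ 2 * z ^ 2) / (r ^ 2 * z))
      (-2 * u r x * (-r + 4 * r ^ 2 - x + 3 * r * x) / (r * (r + x))
        - u r x * (1 + x) ^ 2 * (1 + x ^ 2) / (2 * x ^ 2 * (r + x) * (r * x - 1))) x := by
  obtain ⟨hx0, hx1⟩ := hx
  have hrx : r * x < 1 := by
    rw [div_eq_inv_mul, mul_one] at hx1
    calc r * x < r * r⁻¹ := by exact mul_lt_mul_of_pos_left hx1 hr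
    _ = 1 := mul_inv_cancel₀ hr.ne'
  have hxr : 0 < x + r := by linarith
  have hfx : 0 < x * (1 - r * x) / (x + r) :=
    div_pos (mul_pos hx0 (by linarith)) hxr
  -- derivative of f
  have hnum : HasDerivAt (fun z : ℝ => z * (1 - r * z)) (1 - 2 * r * x) x := by
    have := (hasDerivAt_id x).fun_mul
      ((hasDerivAt_const x (1:ℝ)).fun_sub ((hasDerivAt_id x).const_mul r))
    simp only [id_eq] at this
    refine this.congr_deriv ?_
    ring
  have hden : HasDerivAt (fun z : ℝ => z + r) 1 x := (hasDerivAt_id x).add_const r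
  have hf : HasDerivAt (fun z : ℝ => z * (1 - r * z) / (z + r))
      (((1 - 2 * r * x) * (x + r) - x * (1 - r * x) * 1) / (x + r) ^ 2) x :=
    hnum.div hden hxr.ne'
  set s := Real.sqrt (x * (1 - r * x) / (x + r)) with hs
  have hspos : 0 < s := Real.sqrt_pos.mpr hfx
  have hs2 : s ^ 2 = x * (1 - r * x) / (x + r) := Real.sq_sqrt hfx.le
  have hu : HasDerivAt (fun z : ℝ => u r z)
      ((((1 - 2 * r * x) * (x + r) - x * (1 - r * x) * 1) / (x + r) ^ 2) / (2 * s)) x :=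
    hf.sqrt hfx.ne'
  have hP : HasDerivAt (fun z : ℝ => r + 2 * z - 2 * r * z - r * z ^ 2 + 4 * r ^ 2 * z ^ 2)
      (2 - 2 * r - 2 * r * x + 8 * r ^ 2 * x) x := by
    have := (((((hasDerivAt_const x r).fun_add ((hasDerivAt_id x).const_mul 2)).fun_sub
      ((hasDerivAt_id x).const_mul (2*r))).fun_sub
      (((hasDerivAt_pow 2 x)).const_mul r)).fun_add
      (((hasDerivAt_pow 2 x)).const_mul (4*r^2)))
    simp only [id_eq] at this
    refine this.congr_deriv ?_
    push_cast
    ring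
  have hD : HasDerivAt (fun z : ℝ => r ^ 2 * z) (r ^ 2) x := by
    simpa using (hasDerivAt_id x).const_mul (r^2)
  have hK := ((hu.fun_neg.fun_mul hP).fun_div hD (by positivity))
  refine hK.congr_deriv ?_
  rw [show u r x = s from rfl]
  have hrx1 : r * x - 1 ≠ 0 := by linarith
  have h3 : s ^ 3 = x * (1 - r * x) / (x + r) * s := by
    rw [pow_succ, hs2]
  field_simp
  ring_nf
  simp only [h3, hs2]
  field_simp
  ring
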